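/- arXiv:1101.5652 — 8 statements merged into one kernel-verified Lean document; each statement's English description precedes it below -/
import Mathlib

section
/- Let K be an Archimedean linearly ordered field which is Bolzano complete, i.e., every bounded infinite subset of K has a cluster point. Then K is sequentially complete: every Cauchy sequence in K converges to an element of K. -/
/-- For any finite prefix, there is a positive lower bound on the distance
from `L` to the prefix values that differ from `L`. -/
lemma stmt_10_aux {K : Type*} [Field K] [LinearOrder K] [IsStrictOrderedRing K] (x : ℕ → K) (L : K) (N : ℕ) :
    ∃ δ : K, 0 < δ ∧ ∀ i < N, x i ≠ L → δ ≤ |x i - L| := by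
  induction N with
  | zero => exact ⟨1, one_pos, fun i hi _ => absurd hi (Nat.not_lt_zero i)⟩
  | succ N ih =>
    obtain ⟨δ, hδ, hδ'⟩ := ih
    by_cases hx : x N = L
    · refine ⟨δ, hδ, fun i hi h => ?_⟩
      rcases Nat.lt_succ_iff_lt_or_eq.mp hi with hi | hi
      · exact hδ' i hi h
      · exact absurd (hi ▸ hx) h
    · refine ⟨min δ |x N - L|, lt_min hδ (abs_pos.mpr (sub_ne_zero.mpr hx)), ?_⟩
      intro i hi h
      rcases Nat.lt_succ_iff_lt_or_eq.mp hi with hi | hi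
      · exact le_trans (min_le_left _ _) (hδ' i hi h)
      · subst hi; exact min_le_right _ _

/-- An Archimedean, Bolzano complete linearly ordered field is sequentially
complete: every Cauchy sequence converges. -/
theorem stmt_10 {K : Type*} [Field K] [LinearOrder K] [IsStrictOrderedRing K]
    (hA : ∀ x : K, ∃ n : ℕ, |x| < (n : K))
    (hB : ∀ A : Set K, (∃ c d : K, A ⊆ Set.Icc c d) → A.Infinite →
      ∃ x : K, ∀ ε : K, 0 < ε → ∃ a ∈ A, a ≠ x ∧ |a - x| < ε) :
    ∀ x : ℕ → K,
      (∀ ε : K, 0 < ε → ∃ N : ℕ, ∀ n ≥ N, ∀ m ≥ N, |x n - x m| < ε) →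
      ∃ L : K, ∀ ε : K, 0 < ε → ∃ N : ℕ, ∀ n ≥ N, |x n - L| < ε := by
  intro x hC
  by_cases hfib : ∃ v : K, {n : ℕ | x n = v}.Infinite
  · -- Case A: some value occurs infinitely often
    obtain ⟨v, hv⟩ := hfib
    refine ⟨v, fun ε hε => ?_⟩
    obtain ⟨N, hN⟩ := hC ε hε
    refine ⟨N, fun n hn => ?_⟩
    obtain ⟨m, hm, hmN⟩ := hv.exists_gt N
    have : x m = v := hm
    calc |x n - v| = |x n - x m| := by rw [this]
    _ < ε := hN n hn m (le_of_lt hmN)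
  · -- Case B: every fiber is finite, so range is infinite
    push_neg at hfib
    have hfib : ∀ v : K, {n : ℕ | x n = v}.Finite := by simpa only [Set.not_infinite] using hfib
    -- boundedness
    obtain ⟨N₀, hN₀⟩ := hC 1 one_pos
    have hne : ((Finset.range (N₀ + 1)).image (fun i => |x i|)).Nonempty :=
      Finset.Nonempty.image ⟨0, Finset.mem_range.mpr (Nat.succ_pos _)⟩ _
    set M := ((Finset.range (N₀ + 1)).image (fun i => |x i|)).max' hne with hM
    have hMle : ∀ i ≤ N₀, |x i| ≤ M := by
      intro i hi
      apply Finset.le_max'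
      exact Finset.mem_image.mpr ⟨i, Finset.mem_range.mpr (Nat.lt_succ_of_le hi), rfl⟩
    have hbound : ∀ n, |x n| ≤ M + 1 := by
      intro n
      rcases le_or_gt n N₀ with h | h
      · linarith [hMle n h]
      · have h1 : |x n - x N₀| < 1 := hN₀ n (le_of_lt h) N₀ le_rfl
        have h2 : |x n| ≤ |x n - x N₀| + |x N₀| := by
          calc |x n| = |(x n - x N₀) + x N₀| := by ring_nf
          _ ≤ |x n - x N₀| + |x N₀| := abs_add_le _ _
        have := hMle N₀ le_rfl
        linarith
    have hbdd : ∃ c d : K, Set.range x ⊆ Set.Icc c d := by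
      refine ⟨-(M + 1), M + 1, ?_⟩
      rintro a ⟨n, rfl⟩
      exact abs_le.mp (hbound n)
    -- range infinite
    have hinf : (Set.range x).Infinite := by
      intro hfin
      have : (Set.univ : Set ℕ).Finite := by
        have : (Set.univ : Set ℕ) = ⋃ v ∈ Set.range x, {n : ℕ | x n = v} := by
          ext n
          simp only [Set.mem_univ, Set.mem_iUnion, Set.mem_setOf_eq, true_iff]
          exact ⟨x n, ⟨n, rfl⟩, rfl⟩
        rw [this]
        exact hfin.biUnion (fun v _ => hfib v)
      exact Set.infinite_univ this
    obtain ⟨L, hL⟩ := hB (Set.range x) hbdd hinf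
    refine ⟨L, fun ε hε => ?_⟩
    obtain ⟨N, hN⟩ := hC (ε / 2) (by linarith)
    -- find m ≥ N with |x m - L| < ε / 2
    obtain ⟨δ, hδpos, hδ⟩ := stmt_10_aux x L N
    obtain ⟨a, ⟨m, rfl⟩, haL, hdist⟩ := hL (min (ε / 2) δ) (lt_min (by linarith) hδpos)
    have hmN : N ≤ m := by
      by_contra h
      push_neg at h
      have hle := hδ m h haL
      have : δ < δ := lt_of_le_of_lt hle (lt_of_lt_of_le hdist (min_le_right _ _))
      exact lt_irrefl _ this
    refine ⟨N, fun n hn => ?_⟩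
    have h1 : |x n - x m| < ε / 2 := hN n hn m hmN
    have h2 : |x m - L| < ε / 2 := lt_of_lt_of_le hdist (min_le_left _ _)
    calc |x n - L| = |(x n - x m) + (x m - L)| := by ring_nf
    _ ≤ |x n - x m| + |x m - L| := abs_add_le _ _
    _ < ε := by linarith
end

section
/- Let K be an Archimedean linearly ordered field which is Hilbert complete, i.e., for every Archimedean linearly ordered field A, every order-preserving ring homomorphism from K into A is surjective. Then every nonempty family {[a_i, b_i]}_{i ∈ I} of closed bounded intervals in K with the finite intersection property (indexed by an arbitrary set I, of any cardinality) has nonempty intersection; in particular K is Cantor κ-complete for every infinite cardinal κ. -/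
universe u w

instance : IsStrictOrderedRing (ULift.{u} ℝ) :=
  Function.Injective.isStrictOrderedRing (R := ℝ) ULift.down rfl rfl (fun _ _ => rfl) (fun _ _ => rfl)
    Iff.rfl Iff.rfl

/-- An Archimedean, Hilbert complete linearly ordered field is Cantor
κ-complete for every cardinal: every nonempty family of closed bounded
intervals with the finite intersection property has nonempty intersection. -/
theorem stmt_13 {K : Type u} [Field K] [LinearOrder K] [IsStrictOrderedRing K]
    (hA : ∀ x : K, ∃ n : ℕ, |x| < (n : K))
    (hH : ∀ (A : Type u) [Field A] [LinearOrder A] [IsStrictOrderedRing A],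
      (∀ x : A, ∃ n : ℕ, |x| < (n : A)) →
      ∀ φ : K →+* A, (∀ x y : K, x ≤ y → φ x ≤ φ y) →
        Function.Surjective φ) :
    ∀ (ι : Type w) (a b : ι → K), Nonempty ι →
      (∀ s : Finset ι, (⋂ i ∈ s, Set.Icc (a i) (b i)).Nonempty) →
      (⋂ i : ι, Set.Icc (a i) (b i)).Nonempty := by
  intro ι a b hne hfip
  classical
  -- K is Archimedean
  have harch : Archimedean K := by
    constructor
    intro x y hy
    obtain ⟨n, hn⟩ := hA (x / y)
    exact ⟨n, by
      have := (le_abs_self (x / y)).trans hn.le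
      calc x = (x / y) * y := by field_simp
        _ ≤ (n : K) * y := mul_le_mul_of_nonneg_right this hy.le
        _ = n • y := by simp [nsmul_eq_mul]⟩
  -- the induced order ring hom into ℝ
  let f : K →+*o ℝ := LinearOrderedField.inducedOrderRingHom K ℝ
  -- lift it to ULift ℝ
  let g : K →+* ULift.{u} ℝ := (ULift.ringEquiv.symm : ℝ ≃+* ULift.{u} ℝ).toRingHom.comp f.toRingHom
  have hgmono : ∀ x y : K, x ≤ y → g x ≤ g y := by
    intro x y hxy
    have : f x ≤ f y := f.monotone' hxy
    exact this
  have hULarch : ∀ x : ULift.{u} ℝ, ∃ n : ℕ, |x| < (n : ULift.{u} ℝ) := by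
    intro x
    obtain ⟨n, hn⟩ := exists_nat_gt |x.down|
    refine ⟨n, ?_⟩
    show |x|.down < ((n : ULift.{u} ℝ)).down
    have h1 : |x|.down = |x.down| := rfl
    have h2 : ((n : ULift.{u} ℝ)).down = (n : ℝ) := rfl
    rw [h1, h2]; exact hn
  have hsurj := hH (ULift.{u} ℝ) hULarch g hgmono
  -- f is surjective
  have hfsurj : Function.Surjective f := by
    intro r
    obtain ⟨x, hx⟩ := hsurj (ULift.up r)
    exact ⟨x, congrArg ULift.down hx⟩
  -- f is strictly monotone (injective ring hom from a field)
  have hfinj : Function.Injective (f : K → ℝ) := f.toRingHom.injective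
  have hfsm : StrictMono (f : K → ℝ) := f.monotone'.strictMono_of_injective hfinj
  obtain ⟨i₀⟩ := hne
  -- the set of images of left endpoints
  set S : Set ℝ := Set.range (fun i => f (a i)) with hS
  have hSne : S.Nonempty := ⟨f (a i₀), i₀, rfl⟩
  have hub : ∀ i j, a j ≤ b i := by
    intro i j
    obtain ⟨x, hx⟩ := hfip {i, j}
    simp only [Set.mem_iInter, Finset.mem_insert, Finset.mem_singleton] at hx
    have hxi := hx i (Or.inl rfl)
    have hxj := hx j (Or.inr rfl)
    exact hxj.1.trans hxi.2
  have hSbdd : BddAbove S := ⟨f (b i₀), by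
    rintro _ ⟨j, rfl⟩
    exact f.monotone' (hub i₀ j)⟩
  obtain ⟨x, hx⟩ := hfsurj (sSup S)
  refine ⟨x, Set.mem_iInter.2 fun i => ?_⟩
  constructor
  · have : f (a i) ≤ f x := by
      rw [hx]; exact le_csSup hSbdd ⟨i, rfl⟩
    exact (hfsm.le_iff_le).1 this
  · have : f x ≤ f (b i) := by
      rw [hx]
      exact csSup_le hSne (by rintro _ ⟨j, rfl⟩; exact f.monotone' (hub i j))
    exact (hfsm.le_iff_le).1 this
end

section
/- Let K be a linearly ordered field which is Bolzano complete, i.e., every bounded infinite subset of K has a cluster point. Then K is Archimedean. -/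
/-- A Bolzano complete linearly ordered field (every bounded infinite set has
a cluster point) is Archimedean. -/
theorem stmt_14 {K : Type*} [Field K] [LinearOrder K] [IsStrictOrderedRing K]
    (hB : ∀ A : Set K, (∃ c d : K, A ⊆ Set.Icc c d) → A.Infinite →
      ∃ x : K, ∀ ε : K, 0 < ε → ∃ a ∈ A, a ≠ x ∧ |a - x| < ε) :
    ∀ x : K, ∃ n : ℕ, |x| < (n : K) := by
  by_contra h
  push_neg at h
  obtain ⟨x, hx⟩ := h
  set A : Set K := Set.range ((↑) : ℕ → K) with hA
  have hbdd : ∃ c d : K, A ⊆ Set.Icc c d := by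
    refine ⟨0, |x|, ?_⟩
    rintro _ ⟨n, rfl⟩
    exact ⟨Nat.cast_nonneg n, hx n⟩
  have hinf : A.Infinite := Set.infinite_range_of_injective Nat.cast_injective
  obtain ⟨y, hy⟩ := hB A hbdd hinf
  obtain ⟨a, ⟨n, rfl⟩, hane, han⟩ := hy (1/2) (by norm_num)
  have hpos : 0 < |(n : K) - y| := abs_pos.mpr (sub_ne_zero.mpr hane)
  obtain ⟨b, ⟨m, rfl⟩, hbne, hbm⟩ := hy _ hpos
  have hnm : n ≠ m := by
    rintro rfl
    exact lt_irrefl _ hbm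
  have h1 : (1 : K) ≤ |(n : K) - (m : K)| := by
    have hz : (n : ℤ) ≠ (m : ℤ) := by exact_mod_cast hnm
    have hle : (1 : ℤ) ≤ |(n : ℤ) - (m : ℤ)| := Int.one_le_abs (sub_ne_zero.mpr hz)
    have : ((1 : ℤ) : K) ≤ ((|(n : ℤ) - (m : ℤ)| : ℤ) : K) := by exact_mod_cast hle
    rwa [Int.cast_abs, Int.cast_one, Int.cast_sub, Int.cast_natCast, Int.cast_natCast] at this
  have h2 : |(n : K) - (m : K)| < 1 := by
    calc |(n : K) - (m : K)| ≤ |(n : K) - y| + |(m : K) - y| := by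
          rw [show (n : K) - m = ((n : K) - y) - ((m : K) - y) by ring]
          exact abs_sub _ _
      _ < 1/2 + 1/2 := by
          have := hbm.trans han
          exact add_lt_add han this
      _ = 1 := by norm_num
  exact absurd (h1.trans_lt h2) (lt_irrefl 1)
end

section
/- Let K be a linearly ordered field. If K is Bolzano–Weierstrass complete (every bounded sequence in K has a convergent subsequence) or monotone complete (every bounded monotone sequence in K converges), then K is Archimedean. Moreover, Bolzano–Weierstrass completeness implies monotone completeness. -/
private lemma bw_to_mc {K : Type*} [Field K] [LinearOrder K] [IsStrictOrderedRing K]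
    (hBW : ∀ x : ℕ → K, (∃ c d : K, ∀ n : ℕ, x n ∈ Set.Icc c d) →
        ∃ φ : ℕ → ℕ, StrictMono φ ∧
          ∃ L : K, ∀ ε : K, 0 < ε → ∃ N : ℕ, ∀ n ≥ N, |x (φ n) - L| < ε) :
    ∀ x : ℕ → K, (Monotone x ∨ Antitone x) →
        (∃ c d : K, ∀ n : ℕ, x n ∈ Set.Icc c d) →
        ∃ L : K, ∀ ε : K, 0 < ε → ∃ N : ℕ, ∀ n ≥ N, |x n - L| < ε := by
  intro x hmono hbd
  obtain ⟨φ, hφ, L, hL⟩ := hBW x hbd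
  refine ⟨L, fun ε hε => ?_⟩
  obtain ⟨N, hN⟩ := hL ε hε
  refine ⟨φ N, fun n hn => ?_⟩
  have hm : φ (max N n) ≥ n := le_trans (le_max_right N n) (hφ.le_apply)
  have h1 := hN N le_rfl
  have h2 := hN (max N n) (le_max_left N n)
  rw [abs_sub_lt_iff] at h1 h2 ⊢
  rcases hmono with hM | hA
  · exact ⟨by linarith [hM hm, h2.1], by linarith [hM hn, h1.2]⟩
  · exact ⟨by linarith [hA hn, h1.1], by linarith [hA hm, h2.2]⟩

private lemma mc_to_arch {K : Type*} [Field K] [LinearOrder K] [IsStrictOrderedRing K]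
    (hMC : ∀ x : ℕ → K, (Monotone x ∨ Antitone x) →
        (∃ c d : K, ∀ n : ℕ, x n ∈ Set.Icc c d) →
        ∃ L : K, ∀ ε : K, 0 < ε → ∃ N : ℕ, ∀ n ≥ N, |x n - L| < ε) :
    ∀ x : K, ∃ n : ℕ, |x| < (n : K) := by
  intro x
  by_contra h
  push_neg at h
  obtain ⟨L, hL⟩ := hMC (fun n => (n : K))
    (Or.inl (fun a b hab => Nat.cast_le.mpr hab))
    ⟨0, |x|, fun n => ⟨Nat.cast_nonneg n, h n⟩⟩
  obtain ⟨N, hN⟩ := hL (1/2) (by norm_num)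
  have h1 := hN N le_rfl
  have h2 := hN (N + 1) (Nat.le_succ N)
  rw [abs_sub_lt_iff] at h1 h2
  push_cast at h2
  linarith [h1.1, h1.2, h2.1, h2.2]

/-- If a linearly ordered field is Bolzano–Weierstrass complete or monotone
complete, then it is Archimedean; moreover Bolzano–Weierstrass completeness
implies monotone completeness. -/
theorem stmt_15 {K : Type*} [Field K] [LinearOrder K] [IsStrictOrderedRing K] :
    (((∀ x : ℕ → K, (∃ c d : K, ∀ n : ℕ, x n ∈ Set.Icc c d) →
        ∃ φ : ℕ → ℕ, StrictMono φ ∧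
          ∃ L : K, ∀ ε : K, 0 < ε → ∃ N : ℕ, ∀ n ≥ N, |x (φ n) - L| < ε) ∨
      (∀ x : ℕ → K, (Monotone x ∨ Antitone x) →
        (∃ c d : K, ∀ n : ℕ, x n ∈ Set.Icc c d) →
        ∃ L : K, ∀ ε : K, 0 < ε → ∃ N : ℕ, ∀ n ≥ N, |x n - L| < ε)) →
      ∀ x : K, ∃ n : ℕ, |x| < (n : K)) ∧
    ((∀ x : ℕ → K, (∃ c d : K, ∀ n : ℕ, x n ∈ Set.Icc c d) →
        ∃ φ : ℕ → ℕ, StrictMono φ ∧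
          ∃ L : K, ∀ ε : K, 0 < ε → ∃ N : ℕ, ∀ n ≥ N, |x (φ n) - L| < ε) →
      ∀ x : ℕ → K, (Monotone x ∨ Antitone x) →
        (∃ c d : K, ∀ n : ℕ, x n ∈ Set.Icc c d) →
        ∃ L : K, ∀ ε : K, 0 < ε → ∃ N : ℕ, ∀ n ≥ N, |x n - L| < ε) := by
  refine ⟨?_, bw_to_mc⟩
  rintro (hBW | hMC)
  · exact mc_to_arch (bw_to_mc hBW)
  · exact mc_to_arch hMC
end

section
/- Let K be a linearly ordered field which is Cantor κ-complete for κ = (card K)⁺, the successor cardinal of the cardinality of K. Then every nonempty subset of K bounded from above has a least upper bound in K (K is Dedekind complete); consequently K is Archimedean. -/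
universe u

/-- A linearly ordered field which is Cantor κ-complete for κ the successor
cardinal of its own cardinality is Dedekind complete, and hence Archimedean. -/
theorem stmt_16 {K : Type u} [Field K] [LinearOrder K] [IsStrictOrderedRing K]
    (hC : ∀ (ι : Type u) (a b : ι → K),
      Cardinal.mk ι < Order.succ (Cardinal.mk K) →
      (∀ s : Finset ι, (⋂ i ∈ s, Set.Icc (a i) (b i)).Nonempty) →
      (⋂ i : ι, Set.Icc (a i) (b i)).Nonempty) :
    (∀ S : Set K, S.Nonempty → BddAbove S → ∃ s : K, IsLUB S s) ∧
      ∀ x : K, ∃ n : ℕ, |x| < (n : K) := by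
  have hinf : Infinite K := Infinite.of_injective (Nat.cast : ℕ → K) Nat.cast_injective
  have lub : ∀ S : Set K, S.Nonempty → BddAbove S → ∃ s : K, IsLUB S s := by
    intro S hS hB
    obtain ⟨s0, hs0⟩ := hS
    obtain ⟨u0, hu0⟩ := hB
    have hcard : Cardinal.mk (↥S × ↥(upperBounds S)) < Order.succ (Cardinal.mk K) := by
      have h1 : Cardinal.mk (↥S × ↥(upperBounds S)) ≤ Cardinal.mk K * Cardinal.mk K := by
        rw [Cardinal.mk_prod, Cardinal.lift_id, Cardinal.lift_id]
        exact mul_le_mul' (Cardinal.mk_set_le S) (Cardinal.mk_set_le (upperBounds S))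
      have h2 : Cardinal.mk K * Cardinal.mk K = Cardinal.mk K :=
        Cardinal.mul_eq_self (Cardinal.aleph0_le_mk K)
      exact lt_of_le_of_lt (h1.trans h2.le) (Order.lt_succ _)
    have hfin : ∀ t : Finset (↥S × ↥(upperBounds S)),
        (⋂ i ∈ t, Set.Icc ((i.1 : K)) ((i.2 : K))).Nonempty := by
      intro t
      rcases t.eq_empty_or_nonempty with rfl | ht
      · simp
      · obtain ⟨m, hm, hmax⟩ := t.exists_max_image (fun i => (i.1 : K)) ht
        refine ⟨(m.1 : K), ?_⟩
        simp only [Set.mem_iInter, Set.mem_Icc]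
        intro i hi
        exact ⟨hmax i hi, i.2.2 m.1.2⟩
    obtain ⟨x, hx⟩ := hC (↥S × ↥(upperBounds S)) (fun i => (i.1 : K)) (fun i => (i.2 : K))
      hcard hfin
    simp only [Set.mem_iInter, Set.mem_Icc] at hx
    refine ⟨x, ⟨fun s hs => (hx (⟨s, hs⟩, ⟨u0, hu0⟩)).1,
      fun u hu => (hx (⟨s0, hs0⟩, ⟨u, hu⟩)).2⟩⟩
  refine ⟨lub, fun x => ?_⟩
  by_contra h
  push_neg at h
  obtain ⟨s, hs⟩ := lub (Set.range (Nat.cast : ℕ → K)) ⟨(0 : K), ⟨0, by simp⟩⟩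
    ⟨|x|, by rintro y ⟨n, rfl⟩; exact h n⟩
  have h1 : s - 1 ∉ upperBounds (Set.range (Nat.cast : ℕ → K)) := by
    intro hub
    have := hs.2 hub
    linarith
  obtain ⟨n, hn⟩ : ∃ n : ℕ, s - 1 < (n : K) := by
    by_contra hc
    push_neg at hc
    exact h1 (by rintro y ⟨n, rfl⟩; exact hc n)
  have h2 : ((n + 1 : ℕ) : K) ≤ s := hs.1 ⟨n + 1, rfl⟩
  push_cast at h2
  linarith
end

section
/- Let K be a linearly ordered field and κ an uncountable cardinal. Then the following are equivalent: (i) K is algebraically κ-saturated, i.e., every family of fewer than κ open intervals (a_γ, b_γ) in K with the finite intersection property has nonempty intersection; (ii) K is Cantor κ-complete (every family of fewer than κ closed bounded intervals in K with the finite intersection property has nonempty intersection) and K is algebraically κ-saturated at infinity (every subset of K of cardinality less than κ is bounded above). -/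
universe u

/-- For an uncountable cardinal κ, a linearly ordered field is algebraically
κ-saturated iff it is Cantor κ-complete and algebraically κ-saturated at
infinity. -/
theorem stmt_17 {K : Type u} [Field K] [LinearOrder K] [IsStrictOrderedRing K]
    (κ : Cardinal.{u}) (hκ : Cardinal.aleph0 < κ) :
    (∀ (ι : Type u) (a b : ι → K), Cardinal.mk ι < κ →
      (∀ s : Finset ι, (⋂ i ∈ s, Set.Ioo (a i) (b i)).Nonempty) →
      (⋂ i : ι, Set.Ioo (a i) (b i)).Nonempty) ↔
    ((∀ (ι : Type u) (a b : ι → K), Cardinal.mk ι < κ →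
        (∀ s : Finset ι, (⋂ i ∈ s, Set.Icc (a i) (b i)).Nonempty) →
        (⋂ i : ι, Set.Icc (a i) (b i)).Nonempty) ∧
      ∀ S : Set K, Cardinal.mk S < κ → BddAbove S) := by
  classical
  constructor
  · intro hsat
    constructor
    · -- Cantor κ-completeness
      intro ι a b hcard hFIP
      have hle : ∀ i j, a i ≤ b j := by
        intro i j
        obtain ⟨x, hx⟩ := hFIP {i, j}
        simp only [Set.mem_iInter, Finset.mem_insert, Finset.mem_singleton] at hx
        have h1 := hx i (Or.inl rfl)
        have h2 := hx j (Or.inr rfl)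
        exact h1.1.trans h2.2
      by_cases hcase : ∃ i j, a i = b j
      · obtain ⟨i, j, hij⟩ := hcase
        refine ⟨a i, Set.mem_iInter.2 fun k => ?_⟩
        exact ⟨(hle k j).trans hij.symm.le, hle i k⟩
      · push_neg at hcase
        have hlt : ∀ i j, a i < b j := fun i j => (hle i j).lt_of_ne (hcase i j)
        have hcard2 : Cardinal.mk (ι × ι) < κ := by
          simp only [Cardinal.mk_prod, Cardinal.lift_id]
          exact Cardinal.mul_lt_of_lt hκ.le hcard hcard
        have hFIP2 : ∀ s : Finset (ι × ι),
            (⋂ p ∈ s, Set.Ioo (a p.1) (b p.2)).Nonempty := by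
          intro s
          rcases s.eq_empty_or_nonempty with rfl | hne
          · exact ⟨0, by simp⟩
          · obtain ⟨p0, hp0, hmax⟩ := Finset.exists_max_image s (fun p => a p.1) hne
            obtain ⟨q0, hq0, hmin⟩ := Finset.exists_min_image s (fun p => b p.2) hne
            obtain ⟨x, hx1, hx2⟩ := exists_between (hlt p0.1 q0.2)
            refine ⟨x, Set.mem_iInter₂.2 fun p hp => ?_⟩
            exact ⟨lt_of_le_of_lt (hmax p hp) hx1, lt_of_lt_of_le hx2 (hmin p hp)⟩
        obtain ⟨x, hx⟩ := hsat (ι × ι) (fun p => a p.1) (fun p => b p.2) hcard2 hFIP2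
        refine ⟨x, Set.mem_iInter.2 fun i => ?_⟩
        have := Set.mem_iInter.1 hx (i, i)
        exact ⟨this.1.le, this.2.le⟩
    · -- boundedness
      intro S hS
      rcases Set.eq_empty_or_nonempty S with rfl | ⟨t0, ht0⟩
      · exact bddAbove_empty
      set b : ↥S → K := fun s => if 0 < (s : K) then (s : K)⁻¹ else 1 with hb
      have hbpos : ∀ s : ↥S, 0 < b s := by
        intro s
        simp only [hb]
        split
        · exact inv_pos.2 ‹_›
        · exact one_pos
      have hFIP2 : ∀ s : Finset ↥S, (⋂ i ∈ s, Set.Ioo (0:K) (b i)).Nonempty := by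
        intro s
        rcases s.eq_empty_or_nonempty with rfl | hne
        · exact ⟨1, by simp⟩
        · obtain ⟨i0, hi0, hmin⟩ := Finset.exists_min_image s b hne
          obtain ⟨x, hx1, hx2⟩ := exists_between (hbpos i0)
          refine ⟨x, Set.mem_iInter₂.2 fun i hi => ?_⟩
          exact ⟨hx1, lt_of_lt_of_le hx2 (hmin i hi)⟩
      obtain ⟨x, hx⟩ := hsat (↥S) (fun _ => 0) b hS hFIP2
      have hx' : ∀ s : ↥S, 0 < x ∧ x < b s := fun s => Set.mem_iInter.1 hx s
      have hxpos : 0 < x := (hx' ⟨t0, ht0⟩).1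
      refine ⟨x⁻¹, fun t ht => ?_⟩
      have h := (hx' ⟨t, ht⟩).2
      by_cases htpos : 0 < t
      · simp only [hb, htpos, if_pos] at h
        have := inv_strictAnti₀ hxpos h
        rw [inv_inv] at this
        exact this.le
      · exact (not_lt.1 htpos).trans (inv_pos.2 hxpos).le
  · rintro ⟨hC, hB⟩ ι a b hcard hFIP
    have hlt : ∀ i j, a i < b j := by
      intro i j
      obtain ⟨x, hx⟩ := hFIP {i, j}
      simp only [Set.mem_iInter, Finset.mem_insert, Finset.mem_singleton] at hx
      have h1 := hx i (Or.inl rfl)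
      have h2 := hx j (Or.inr rfl)
      exact h1.1.trans h2.2
    set S : Set K := Set.range (fun p : ι × ι => (b p.2 - a p.1)⁻¹) with hSdef
    have hScard : Cardinal.mk S < κ := by
      refine lt_of_le_of_lt Cardinal.mk_range_le ?_
      simp only [Cardinal.mk_prod, Cardinal.lift_id]
      exact Cardinal.mul_lt_of_lt hκ.le hcard hcard
    obtain ⟨M, hM⟩ := hB S hScard
    set M' : K := max M 1 with hM'
    have hM'pos : 0 < M' := lt_of_lt_of_le one_pos (le_max_right _ _)
    set δ : K := (3 * M')⁻¹ with hδdef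
    have hδpos : 0 < δ := inv_pos.2 (by positivity)
    have hδ : δ * (3 * M') = 1 := inv_mul_cancel₀ (by positivity)
    have key : ∀ i j, a i + δ ≤ b j - δ := by
      intro i j
      have h2 : 0 < b j - a i := sub_pos.2 (hlt i j)
      have h1 : (b j - a i)⁻¹ ≤ M' :=
        le_trans (hM (Set.mem_range.2 ⟨(i, j), rfl⟩)) (le_max_left _ _)
      have h1' : 1 ≤ M' * (b j - a i) := by
        have := mul_le_mul_of_nonneg_right h1 h2.le
        rwa [inv_mul_cancel₀ h2.ne'] at this
      nlinarith [mul_pos hM'pos hδpos, mul_pos hδpos h2]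
    have hFIP2 : ∀ s : Finset ι, (⋂ i ∈ s, Set.Icc (a i + δ) (b i - δ)).Nonempty := by
      intro s
      rcases s.eq_empty_or_nonempty with rfl | hne
      · exact ⟨0, by simp⟩
      · obtain ⟨i0, hi0, hmax⟩ := Finset.exists_max_image s (fun i => a i + δ) hne
        refine ⟨a i0 + δ, Set.mem_iInter₂.2 fun i hi => ?_⟩
        exact ⟨hmax i hi, key i0 i⟩
    obtain ⟨x, hx⟩ := hC ι (fun i => a i + δ) (fun i => b i - δ) hcard hFIP2
    refine ⟨x, Set.mem_iInter.2 fun i => ?_⟩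
    have h := Set.mem_iInter.1 hx i
    exact ⟨lt_of_lt_of_le (lt_add_of_pos_right _ hδpos) h.1,
      lt_of_le_of_lt h.2 (sub_lt_self _ hδpos)⟩
end

section
/- Let K be a linearly ordered field which is algebraically saturated, i.e., every countable family of open intervals in K with the finite intersection property has nonempty intersection. Then every sequence in K that converges (in the order sense) is eventually constant, and consequently K is sequentially complete: every Cauchy sequence in K converges. -/
/-- From saturation: any countable family of positive elements has a common
positive strict lower bound. -/
lemma stmt_18_key {K : Type*} [Field K] [LinearOrder K] [IsStrictOrderedRing K]
    (hsat : ∀ a b : ℕ → K,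
      (∀ s : Finset ℕ, (⋂ i ∈ s, Set.Ioo (a i) (b i)).Nonempty) →
      (⋂ i : ℕ, Set.Ioo (a i) (b i)).Nonempty)
    (c : ℕ → K) (hc : ∀ n, 0 < c n) :
    ∃ δ : K, 0 < δ ∧ ∀ n, δ < c n := by
  obtain ⟨δ, hδ⟩ := hsat (fun _ => 0) c (by
    intro s
    rcases s.eq_empty_or_nonempty with rfl | hs
    · simp
    · refine ⟨(s.inf' hs c) / 2, ?_⟩
      simp only [Set.mem_iInter, Set.mem_Ioo]
      intro i hi
      have h1 : 0 < s.inf' hs c := by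
        rw [Finset.lt_inf'_iff]
        intro j _; exact hc j
      have h2 : s.inf' hs c ≤ c i := Finset.inf'_le _ hi
      constructor <;> linarith)
  simp only [Set.mem_iInter, Set.mem_Ioo] at hδ
  exact ⟨δ, (hδ 0).1, fun n => (hδ n).2⟩

/-- In an algebraically saturated linearly ordered field, every convergent
sequence is eventually constant; consequently the field is sequentially
complete. -/
theorem stmt_18 {K : Type*} [Field K] [LinearOrder K] [IsStrictOrderedRing K]
    (hsat : ∀ a b : ℕ → K,
      (∀ s : Finset ℕ, (⋂ i ∈ s, Set.Ioo (a i) (b i)).Nonempty) →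
      (⋂ i : ℕ, Set.Ioo (a i) (b i)).Nonempty) :
    (∀ (x : ℕ → K) (L : K),
      (∀ ε : K, 0 < ε → ∃ N : ℕ, ∀ n ≥ N, |x n - L| < ε) →
      ∃ N : ℕ, ∀ n ≥ N, x n = x N) ∧
    ∀ x : ℕ → K,
      (∀ ε : K, 0 < ε → ∃ N : ℕ, ∀ n ≥ N, ∀ m ≥ N, |x n - x m| < ε) →
      ∃ L : K, ∀ ε : K, 0 < ε → ∃ N : ℕ, ∀ n ≥ N, |x n - L| < ε := by
  constructor
  · intro x L hconv
    set c : ℕ → K := fun n => if x n = L then 1 else |x n - L| with hc_def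
    have hc : ∀ n, 0 < c n := by
      intro n
      by_cases h : x n = L
      · simp [hc_def, h]
      · simp only [hc_def, if_neg h]
        rw [abs_pos, sub_ne_zero]
        exact h
    obtain ⟨δ, hδ0, hδ⟩ := stmt_18_key hsat c hc
    obtain ⟨N, hN⟩ := hconv δ hδ0
    have heq : ∀ n ≥ N, x n = L := by
      intro n hn
      by_contra h
      have h1 := hδ n
      simp only [hc_def, if_neg h] at h1
      exact absurd (hN n hn) (not_lt.mpr h1.le)
    exact ⟨N, fun n hn => (heq n hn).trans (heq N le_rfl).symm⟩
  · intro x hcauchy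
    set c : ℕ → K := fun n =>
      if x (Nat.unpair n).1 = x (Nat.unpair n).2 then 1
      else |x (Nat.unpair n).1 - x (Nat.unpair n).2| with hc_def
    have hc : ∀ n, 0 < c n := by
      intro n
      by_cases h : x (Nat.unpair n).1 = x (Nat.unpair n).2
      · simp [hc_def, h]
      · simp only [hc_def, if_neg h]
        rw [abs_pos, sub_ne_zero]
        exact h
    obtain ⟨δ, hδ0, hδ⟩ := stmt_18_key hsat c hc
    obtain ⟨N, hN⟩ := hcauchy δ hδ0
    refine ⟨x N, fun ε hε => ⟨N, fun n hn => ?_⟩⟩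
    have heq : x n = x N := by
      by_contra h
      have h1 := hδ (Nat.pair n N)
      simp only [hc_def, Nat.unpair_pair, if_neg h] at h1
      exact absurd (hN n hn N le_rfl) (not_lt.mpr h1.le)
    simp [heq, hε]
end

section
/- Let K be a linearly ordered field which is Cantor complete (every sequence of closed bounded intervals with the finite intersection property has nonempty intersection) but not algebraically saturated (there exists a countable family of open intervals with the finite intersection property and empty intersection). Then: (i) K has a strictly increasing sequence that is unbounded above; and (ii) K is sequentially complete: every Cauchy sequence in K converges. -/
private def pmax {K : Type*} [LinearOrder K] (a : ℕ → K) : ℕ → K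
  | 0 => a 0
  | n + 1 => max (pmax a n) (a (n + 1))

private def pmin {K : Type*} [LinearOrder K] (b : ℕ → K) : ℕ → K
  | 0 => b 0
  | n + 1 => min (pmin b n) (b (n + 1))

private lemma le_pmax {K : Type*} [LinearOrder K] (a : ℕ → K) :
    ∀ n, ∀ i ≤ n, a i ≤ pmax a n := by
  intro n
  induction n with
  | zero => intro i hi; simp [Nat.le_zero.mp hi, pmax]
  | succ n ih =>
    intro i hi
    rcases eq_or_lt_of_le hi with h | h
    · simp [h, pmax]
    · exact (ih i (Nat.lt_succ_iff.mp h)).trans (le_max_left _ _)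

private lemma pmin_le {K : Type*} [LinearOrder K] (b : ℕ → K) :
    ∀ n, ∀ i ≤ n, pmin b n ≤ b i := by
  intro n
  induction n with
  | zero => intro i hi; simp [Nat.le_zero.mp hi, pmin]
  | succ n ih =>
    intro i hi
    rcases eq_or_lt_of_le hi with h | h
    · simp [h, pmin]
    · exact (min_le_left _ _).trans (ih i (Nat.lt_succ_iff.mp h))

private lemma pmax_mono {K : Type*} [LinearOrder K] (a : ℕ → K) : Monotone (pmax a) :=
  monotone_nat_of_le_succ fun n => le_max_left (pmax a n) (a (n + 1))

private lemma pmin_anti {K : Type*} [LinearOrder K] (b : ℕ → K) : Antitone (pmin b) :=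
  antitone_nat_of_succ_le fun n => min_le_left (pmin b n) (b (n + 1))

private lemma pmax_lt {K : Type*} [LinearOrder K] {a : ℕ → K} {x : K} :
    ∀ {n}, (∀ i ≤ n, a i < x) → pmax a n < x := by
  intro n
  induction n with
  | zero => intro h; exact h 0 le_rfl
  | succ n ih =>
    intro h
    exact max_lt (ih fun i hi => h i (hi.trans (Nat.le_succ n))) (h (n + 1) le_rfl)

private lemma lt_pmin {K : Type*} [LinearOrder K] {b : ℕ → K} {x : K} :
    ∀ {n}, (∀ i ≤ n, x < b i) → x < pmin b n := by
  intro n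
  induction n with
  | zero => intro h; exact h 0 le_rfl
  | succ n ih =>
    intro h
    exact lt_min (ih fun i hi => h i (hi.trans (Nat.le_succ n))) (h (n + 1) le_rfl)

/-- From Cantor completeness plus failure of algebraic saturation we get a
sequence of positive elements with infimum zero. -/
private lemma key {K : Type*} [Field K] [LinearOrder K] [IsStrictOrderedRing K]
    (hC : ∀ a b : ℕ → K,
      (∀ s : Finset ℕ, (⋂ i ∈ s, Set.Icc (a i) (b i)).Nonempty) →
      (⋂ i : ℕ, Set.Icc (a i) (b i)).Nonempty)
    (hns : ¬∀ a b : ℕ → K,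
      (∀ s : Finset ℕ, (⋂ i ∈ s, Set.Ioo (a i) (b i)).Nonempty) →
      (⋂ i : ℕ, Set.Ioo (a i) (b i)).Nonempty) :
    ∃ t : ℕ → K, (∀ n, 0 < t n) ∧ ∀ ε : K, 0 < ε → ∃ n, t n < ε := by
  push_neg at hns
  obtain ⟨a, b, hfip, hempty⟩ := hns
  set A : ℕ → K := pmax a with hA
  set B : ℕ → K := pmin b with hB
  have hAB : ∀ n, A n < B n := by
    intro n
    obtain ⟨x, hx⟩ := hfip (Finset.range (n + 1))
    simp only [Set.mem_iInter, Finset.mem_range, Set.mem_Ioo] at hx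
    have h1 : A n < x := pmax_lt fun i hi => (hx i (Nat.lt_succ_of_le hi)).1
    have h2 : x < B n := lt_pmin fun i hi => (hx i (Nat.lt_succ_of_le hi)).2
    exact h1.trans h2
  have hfipC : ∀ s : Finset ℕ, (⋂ i ∈ s, Set.Icc (A i) (B i)).Nonempty := by
    intro s
    refine ⟨A (s.sup id), ?_⟩
    simp only [Set.mem_iInter, Set.mem_Icc]
    intro i hi
    have hle : i ≤ s.sup id := Finset.le_sup (f := id) hi
    exact ⟨pmax_mono a hle, le_of_lt ((hAB _).trans_le (pmin_anti b hle))⟩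
  obtain ⟨c, hc⟩ := hC A B hfipC
  simp only [Set.mem_iInter, Set.mem_Icc] at hc
  have hcnot : ∃ m, ¬(a m < c ∧ c < b m) := by
    by_contra hcon
    push_neg at hcon
    have hmem : c ∈ ⋂ i : ℕ, Set.Ioo (a i) (b i) := by
      simp only [Set.mem_iInter, Set.mem_Ioo]
      exact hcon
    rw [hempty] at hmem
    exact hmem.elim
  obtain ⟨m, hm⟩ := hcnot
  refine ⟨fun n => B n - A n, fun n => sub_pos.mpr (hAB n), ?_⟩
  intro ε hε
  by_contra h
  push_neg at h
  -- h : ∀ n, ε ≤ B n - A n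
  rcases not_and_or.mp hm with h1 | h2
  · -- c ≤ a m, so A m = c
    have hcam : c ≤ a m := not_lt.mp h1
    have hAmc : A m = c := le_antisymm (hc m).1 (hcam.trans (le_pmax a m m le_rfl))
    have hy : (c + ε / 2) ∈ ⋂ i : ℕ, Set.Ioo (a i) (b i) := by
      simp only [Set.mem_iInter, Set.mem_Ioo]
      intro k
      constructor
      · calc a k ≤ A k := le_pmax a k k le_rfl
          _ ≤ c := (hc k).1
          _ < c + ε / 2 := by linarith
      · have hM : A (max k m) = c :=
          le_antisymm (hc _).1 (hAmc ▸ pmax_mono a (le_max_right k m))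
        have hBM : c + ε ≤ B (max k m) := by
          have := h (max k m); rw [hM] at this; linarith
        calc c + ε / 2 < c + ε := by linarith
          _ ≤ B (max k m) := hBM
          _ ≤ B k := pmin_anti b (le_max_left k m)
          _ ≤ b k := pmin_le b k k le_rfl
    rw [hempty] at hy
    exact hy.elim
  · -- b m ≤ c, so B m = c
    have hcbm : b m ≤ c := not_lt.mp h2
    have hBmc : B m = c := le_antisymm ((pmin_le b m m le_rfl).trans hcbm) (hc m).2
    have hy : (c - ε / 2) ∈ ⋂ i : ℕ, Set.Ioo (a i) (b i) := by
      simp only [Set.mem_iInter, Set.mem_Ioo]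
      intro k
      have hM : B (max k m) = c :=
        le_antisymm (hBmc ▸ pmin_anti b (le_max_right k m)) (hc _).2
      have hAM : A (max k m) ≤ c - ε := by
        have := h (max k m); rw [hM] at this; linarith
      constructor
      · calc a k ≤ A k := le_pmax a k k le_rfl
          _ ≤ A (max k m) := pmax_mono a (le_max_left k m)
          _ ≤ c - ε := hAM
          _ < c - ε / 2 := by linarith
      · calc c - ε / 2 < c := by linarith
          _ = B (max k m) := hM.symm
          _ ≤ B k := pmin_anti b (le_max_left k m)
          _ ≤ b k := pmin_le b k k le_rfl
    rw [hempty] at hy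
    exact hy.elim

/-- A Cantor complete but not algebraically saturated linearly ordered field
has a strictly increasing sequence unbounded above, and is sequentially
complete. -/
theorem stmt_19 {K : Type*} [Field K] [LinearOrder K] [IsStrictOrderedRing K]
    (hC : ∀ a b : ℕ → K,
      (∀ s : Finset ℕ, (⋂ i ∈ s, Set.Icc (a i) (b i)).Nonempty) →
      (⋂ i : ℕ, Set.Icc (a i) (b i)).Nonempty)
    (hns : ¬∀ a b : ℕ → K,
      (∀ s : Finset ℕ, (⋂ i ∈ s, Set.Ioo (a i) (b i)).Nonempty) →
      (⋂ i : ℕ, Set.Ioo (a i) (b i)).Nonempty) :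
    (∃ x : ℕ → K, StrictMono x ∧ ∀ c : K, ∃ n : ℕ, c < x n) ∧
    ∀ x : ℕ → K,
      (∀ ε : K, 0 < ε → ∃ N : ℕ, ∀ n ≥ N, ∀ m ≥ N, |x n - x m| < ε) →
      ∃ L : K, ∀ ε : K, 0 < ε → ∃ N : ℕ, ∀ n ≥ N, |x n - L| < ε := by
  obtain ⟨t, ht0, hts⟩ := key hC hns
  constructor
  · -- unbounded strictly increasing sequence
    refine ⟨fun n => pmax (fun m => (t m)⁻¹) n + n, ?_, ?_⟩
    · apply strictMono_nat_of_lt_succ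
      intro n
      have h1 : pmax (fun m => (t m)⁻¹) n ≤ pmax (fun m => (t m)⁻¹) (n + 1) :=
        pmax_mono _ (Nat.le_succ n)
      have h2 : (n : K) < (n + 1 : ℕ) := by push_cast; linarith
      calc pmax (fun m => (t m)⁻¹) n + (n : K)
          < pmax (fun m => (t m)⁻¹) n + ((n + 1 : ℕ) : K) := by linarith
        _ ≤ pmax (fun m => (t m)⁻¹) (n + 1) + ((n + 1 : ℕ) : K) := by linarith
    · intro c
      set c' : K := max c 0 + 1 with hc'
      have hc'pos : 0 < c' := by positivity
      obtain ⟨n, hn⟩ := hts c'⁻¹ (inv_pos.mpr hc'pos)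
      refine ⟨n, ?_⟩
      have htn : c' < (t n)⁻¹ := by
        rw [← inv_inv c']
        exact inv_strictAnti₀ (ht0 n) hn
      have hcc' : c < c' := by
        have := le_max_left c 0; linarith
      have hle : (fun m => (t m)⁻¹) n ≤ pmax (fun m => (t m)⁻¹) n := le_pmax (fun m => (t m)⁻¹) n n le_rfl
      have hn0 : (0 : K) ≤ (n : K) := Nat.cast_nonneg n
      calc c < c' := hcc'
        _ < (t n)⁻¹ := htn
        _ ≤ pmax (fun m => (t m)⁻¹) n := hle
        _ ≤ pmax (fun m => (t m)⁻¹) n + n := by linarith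
  · -- sequential completeness
    intro x hx
    choose N hN using fun m => hx (t m) (ht0 m)
    have hfipC : ∀ s : Finset ℕ,
        (⋂ i ∈ s, Set.Icc (x (N i) - t i) (x (N i) + t i)).Nonempty := by
      intro s
      refine ⟨x (s.sup N), ?_⟩
      simp only [Set.mem_iInter, Set.mem_Icc]
      intro i hi
      have hle : N i ≤ s.sup N := Finset.le_sup hi
      have := hN i (s.sup N) hle (N i) le_rfl
      rw [abs_sub_lt_iff] at this
      constructor <;> linarith [this.1, this.2]
    obtain ⟨L, hL⟩ := hC (fun i => x (N i) - t i) (fun i => x (N i) + t i) hfipC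
    simp only [Set.mem_iInter, Set.mem_Icc] at hL
    refine ⟨L, ?_⟩
    intro ε hε
    obtain ⟨m, hm⟩ := hts (ε / 2) (by linarith)
    refine ⟨N m, ?_⟩
    intro n hn
    have h1 := hN m n hn (N m) le_rfl
    rw [abs_sub_lt_iff] at h1
    have h2 := hL m
    rw [abs_sub_lt_iff]
    constructor <;> linarith [h1.1, h1.2, h2.1, h2.2]
end
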